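/- Suppose a pseudo-Laman bigraph B=(G,H) with biedge set ℰ without self-loops untangles via a biedge ē∈ℰ into bigraphs B₁ and B₂ (with ℰ₁ and ℰ₂ both nonempty), where ē is a bridge in G but not a bridge in H. Then B does not have Laman number N with respect to ē for any N≥1. -/

import Mathlib

set_option maxHeartbeats 1000000

noncomputable section
open Classical

namespace LamanPaper

variable {V E : Type}

/-- The adjacency relation induced by an incidence map `ends`. -/
def adjRel (ends : E → Sym2 V) : V → V → Prop := fun u v => ∃ e : E, ends e = s(u, v)

/-- The setoid of connected components of the graph with incidence map `ends`. -/
def ccSetoid (ends : E → Sym2 V) : Setoid V :=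
  ⟨Relation.EqvGen (adjRel ends), Relation.EqvGen.is_equivalence _⟩

/-- The number of connected components. -/
def numCC (ends : E → Sym2 V) : ℕ := Nat.card (Quotient (ccSetoid ends))

/-- The dimension of a graph: number of vertices minus number of connected components. -/
def gDim (ends : E → Sym2 V) : ℕ := Nat.card V - numCC ends

/-- Restriction of a graph to a set of edges. -/
def restrictEnds (ends : E → Sym2 V) (S : Set E) : {e : E // e ∈ S} → Sym2 V :=
  fun e => ends e.1

/-- Deletion of a set of edges from a graph. -/
def deleteEnds (ends : E → Sym2 V) (S : Set E) : {e : E // e ∉ S} → Sym2 V :=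
  fun e => ends e.1

/-- The setoid on vertices generated by contracting the edges in `S`. -/
def contrSetoid (ends : E → Sym2 V) (S : Set E) : Setoid V :=
  ⟨Relation.EqvGen fun u v => ∃ e ∈ S, ends e = s(u, v), Relation.EqvGen.is_equivalence _⟩

/-- Contraction of the edges in `S`: the remaining edges join the equivalence classes of
their endpoints. -/
def contractEnds (ends : E → Sym2 V) (S : Set E) :
    {e : E // e ∉ S} → Sym2 (Quotient (contrSetoid ends S)) :=
  fun e => (ends e.1).map (Quotient.mk (contrSetoid ends S))

/-- An edge is a bridge if deleting it increases the number of connected components. -/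
def IsBridge (ends : E → Sym2 V) (e : E) : Prop :=
  numCC ends < numCC (deleteEnds ends ({e} : Set E))

/-- The smaller endpoint of an (unordered) edge, with respect to a linear order. -/
def sMin [LinearOrder V] (s : Sym2 V) : V :=
  Sym2.lift ⟨fun a b => min a b, fun a b => min_comm a b⟩ s

/-- The larger endpoint of an (unordered) edge, with respect to a linear order. -/
def sMax [LinearOrder V] (s : Sym2 V) : V :=
  Sym2.lift ⟨fun a b => max a b, fun a b => max_comm a b⟩ s

theorem sMin_mem [LinearOrder V] (s : Sym2 V) : sMin s ∈ s := by
  induction s using Sym2.ind with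
  | _ x y => rcases min_choice x y with h | h <;> simp [sMin, Sym2.lift_mk, h, Sym2.mem_iff]

theorem sMax_mem [LinearOrder V] (s : Sym2 V) : sMax s ∈ s := by
  induction s using Sym2.ind with
  | _ x y => rcases max_choice x y with h | h <;> simp [sMax, Sym2.lift_mk, h, Sym2.mem_iff]

/-- A bigraph: a pair of finite multigraphs `G = (V, ℰ)` and `H = (W, ℰ)` sharing the same
set of (bi)edges, together with fixed total orders on the two vertex sets. -/
structure Bigraph where
  ℰ : Type
  V : Type
  W : Type
  finE : Finite ℰ
  finV : Finite V
  finW : Finite W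
  τG : ℰ → Sym2 V
  τH : ℰ → Sym2 W
  ordV : LinearOrder V
  ordW : LinearOrder W

namespace Bigraph

variable (B : Bigraph)

instance : Finite B.ℰ := B.finE
instance : Finite B.V := B.finV
instance : Finite B.W := B.finW

/-- The dimension of the first graph of a bigraph. -/
def dimG : ℕ := gDim B.τG

/-- The dimension of the second graph of a bigraph. -/
def dimH : ℕ := gDim B.τH

/-- A bigraph is pseudo-Laman if `dim G + dim H = |ℰ| + 1`. -/
def PseudoLaman : Prop := B.dimG + B.dimH = Nat.card B.ℰ + 1

/-- A bigraph has a (self-)loop if some biedge is a self-loop in `G` or in `H`. -/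
def HasLoop : Prop := (∃ e, (B.τG e).IsDiag) ∨ (∃ e, (B.τH e).IsDiag)

/-- The set `P` of ordered pairs of distinct vertices of `G` joined by some edge. -/
def Pset : Set (B.V × B.V) := {p | p.1 ≠ p.2 ∧ ∃ e, B.τG e = s(p.1, p.2)}

/-- The set `Q` of ordered pairs of distinct vertices of `H` joined by some edge. -/
def Qset : Set (B.W × B.W) := {q | q.1 ≠ q.2 ∧ ∃ e, B.τH e = s(q.1, q.2)}

/-- The smaller endpoint (w.r.t. the fixed total order) of a biedge in `G`. -/
def eFstG (e : B.ℰ) : B.V := letI := B.ordV; sMin (B.τG e)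

/-- The larger endpoint of a biedge in `G`. -/
def eSndG (e : B.ℰ) : B.V := letI := B.ordV; sMax (B.τG e)

/-- The smaller endpoint of a biedge in `H`. -/
def eFstH (e : B.ℰ) : B.W := letI := B.ordW; sMin (B.τH e)

/-- The larger endpoint of a biedge in `H`. -/
def eSndH (e : B.ℰ) : B.W := letI := B.ordW; sMax (B.τH e)

theorem eFstG_mem (e : B.ℰ) : B.eFstG e ∈ B.τG e := by
  letI := B.ordV; exact sMin_mem _

theorem eSndG_mem (e : B.ℰ) : B.eSndG e ∈ B.τG e := by
  letI := B.ordV; exact sMax_mem _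

theorem eFstH_mem (e : B.ℰ) : B.eFstH e ∈ B.τH e := by
  letI := B.ordW; exact sMin_mem _

theorem eSndH_mem (e : B.ℰ) : B.eSndH e ∈ B.τH e := by
  letI := B.ordW; exact sMax_mem _

/-- The affine solution set `Z^B(λ)` of a bigraph with distinguished biedge `ebar` and
parameters `lam`. -/
def ZSet (ebar : B.ℰ) (lam : {e : B.ℰ // e ≠ ebar} → ℂ) :
    Set ((↥B.Pset → ℂ) × (↥B.Qset → ℂ)) :=
  {xy |
    (∀ p : ↥B.Pset, (p : B.V × B.V) = (B.eFstG ebar, B.eSndG ebar) → xy.1 p = 1) ∧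
    (∀ q : ↥B.Qset, (q : B.W × B.W) = (B.eFstH ebar, B.eSndH ebar) → xy.2 q = 1) ∧
    (∀ e : {e : B.ℰ // e ≠ ebar}, ∀ p : ↥B.Pset, ∀ q : ↥B.Qset,
      (p : B.V × B.V) = (B.eFstG e.1, B.eSndG e.1) →
      (q : B.W × B.W) = (B.eFstH e.1, B.eSndH e.1) →
      xy.1 p * xy.2 q = lam e) ∧
    (∀ (n : ℕ) (u : ℕ → B.V) (w : Fin n → ↥B.Pset),
      (∀ i : Fin n, (w i : B.V × B.V) = (u i.1, u (i.1 + 1))) → u n = u 0 →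
      ∑ i, xy.1 (w i) = 0) ∧
    (∀ (n : ℕ) (u : ℕ → B.W) (w : Fin n → ↥B.Qset),
      (∀ i : Fin n, (w i : B.W × B.W) = (u i.1, u (i.1 + 1))) → u n = u 0 →
      ∑ i, xy.2 (w i) = 0)}

/-- `B` has Laman number `N` with respect to the biedge `ebar`:  there is a nonzero
polynomial `p` in the parameters such that whenever `p` does not vanish, the solution set
`Z^B(λ)` has exactly `N` elements.  By convention a bigraph containing a self-loop has
Laman number `0`. -/
def HasLamanNumber (ebar : B.ℰ) (N : ℕ) : Prop :=
  (B.HasLoop ∧ N = 0) ∨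
  (¬ B.HasLoop ∧ ∃ P : MvPolynomial {e : B.ℰ // e ≠ ebar} ℂ, P ≠ 0 ∧
    ∀ lam : {e : B.ℰ // e ≠ ebar} → ℂ, MvPolynomial.eval lam P ≠ 0 →
      (B.ZSet ebar lam).Finite ∧ Nat.card ↥(B.ZSet ebar lam) = N)

/-- The bigraph obtained by restricting the biedges to a subset `S` (both in `G` and `H`). -/
def restrict (S : Set B.ℰ) : Bigraph where
  ℰ := {e : B.ℰ // e ∈ S}
  V := B.V
  W := B.W
  finE := Subtype.finite
  finV := B.finV
  finW := B.finW
  τG := fun e => B.τG e.1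
  τH := fun e => B.τH e.1
  ordV := B.ordV
  ordW := B.ordW

/-- The bigraph `^M B = (G / M, H ∖ M)`: contract the biedges of `M` in `G` and delete them
in `H`. -/
def ctrG (M : Set B.ℰ) (ord : LinearOrder (Quotient (contrSetoid B.τG M))) : Bigraph where
  ℰ := {e : B.ℰ // e ∉ M}
  V := Quotient (contrSetoid B.τG M)
  W := B.W
  finE := Subtype.finite
  finV := Quotient.finite _
  finW := B.finW
  τG := contractEnds B.τG M
  τH := fun e => B.τH e.1
  ordV := ord
  ordW := B.ordW

/-- The bigraph `B ^ M = (G ∖ M, H / M)`: delete the biedges of `M` in `G` and contract them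
in `H`. -/
def ctrH (M : Set B.ℰ) (ord : LinearOrder (Quotient (contrSetoid B.τH M))) : Bigraph where
  ℰ := {e : B.ℰ // e ∉ M}
  V := B.V
  W := Quotient (contrSetoid B.τH M)
  finE := Subtype.finite
  finV := B.finV
  finW := Quotient.finite _
  τG := fun e => B.τG e.1
  τH := contractEnds B.τH M
  ordV := B.ordV
  ordW := ord

/-! ### Bidistances -/

/-- Symmetry of a function on `P`: `d_V(u,v) = d_V(v,u)`. -/
def BidistSymmG (dV : ↥B.Pset → ℚ) : Prop :=
  ∀ p p' : ↥B.Pset, (p' : B.V × B.V) = ((p : B.V × B.V).2, (p : B.V × B.V).1) → dV p' = dV p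

/-- Symmetry of a function on `Q`: `d_W(t,w) = d_W(w,t)`. -/
def BidistSymmH (dW : ↥B.Qset → ℚ) : Prop :=
  ∀ q q' : ↥B.Qset, (q' : B.W × B.W) = ((q : B.W × B.W).2, (q : B.W × B.W).1) → dW q' = dW q

/-- The sum condition: `d_V(u,v) + d_W(t,w) = wt(e)` for every biedge `e ≠ ebar`. -/
def BidistSum (ebar : B.ℰ) (wt : {e : B.ℰ // e ≠ ebar} → ℚ)
    (dV : ↥B.Pset → ℚ) (dW : ↥B.Qset → ℚ) : Prop :=
  ∀ e : {e : B.ℰ // e ≠ ebar}, ∀ p : ↥B.Pset, ∀ q : ↥B.Qset,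
    s((p : B.V × B.V).1, (p : B.V × B.V).2) = B.τG e.1 →
    s((q : B.W × B.W).1, (q : B.W × B.W).2) = B.τH e.1 →
    dV p + dW q = wt e

/-- The base condition: `d_V(ū,v̄) = d_W(t̄,w̄) = 0` on the distinguished biedge. -/
def BidistBase (ebar : B.ℰ) (dV : ↥B.Pset → ℚ) (dW : ↥B.Qset → ℚ) : Prop :=
  (∀ p : ↥B.Pset, s((p : B.V × B.V).1, (p : B.V × B.V).2) = B.τG ebar → dV p = 0) ∧
  (∀ q : ↥B.Qset, s((q : B.W × B.W).1, (q : B.W × B.W).2) = B.τH ebar → dW q = 0)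

/-- On every closed walk in `G`, the minimum of `d_V` over the consecutive vertex pairs is
attained at least twice. -/
def BidistMinG (dV : ↥B.Pset → ℚ) : Prop :=
  ∀ (n : ℕ) (u : ℕ → B.V) (w : Fin n → ↥B.Pset),
    (∀ i : Fin n, (w i : B.V × B.V) = (u i.1, u (i.1 + 1))) → u n = u 0 →
    ∀ i : Fin n, (∀ k, dV (w i) ≤ dV (w k)) → ∃ j, j ≠ i ∧ dV (w j) = dV (w i)

/-- On every closed walk in `H`, the minimum of `d_W` over the consecutive vertex pairs is
attained at least twice. -/
def BidistMinH (dW : ↥B.Qset → ℚ) : Prop :=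
  ∀ (n : ℕ) (u : ℕ → B.W) (w : Fin n → ↥B.Qset),
    (∀ i : Fin n, (w i : B.W × B.W) = (u i.1, u (i.1 + 1))) → u n = u 0 →
    ∀ i : Fin n, (∀ k, dW (w i) ≤ dW (w k)) → ∃ j, j ≠ i ∧ dW (w j) = dW (w i)

/-- A bidistance on `B` compatible with the weight vector `wt`. -/
def IsBidistance (ebar : B.ℰ) (wt : {e : B.ℰ // e ≠ ebar} → ℚ)
    (dV : ↥B.Pset → ℚ) (dW : ↥B.Qset → ℚ) : Prop :=
  B.BidistSymmG dV ∧ B.BidistSymmH dW ∧ B.BidistSum ebar wt dV dW ∧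
  B.BidistBase ebar dV dW ∧ B.BidistMinG dV ∧ B.BidistMinH dW

/-! ### The quotient bigraph `B_d` -/

/-- The value of `d_V` on (the endpoint pair of) a biedge. -/
def gvalG (dV : ↥B.Pset → ℚ) (e : B.ℰ) : ℚ :=
  if h : ∃ p : ↥B.Pset, s((p : B.V × B.V).1, (p : B.V × B.V).2) = B.τG e then dV h.choose
  else 0

/-- The value of `d_W` on (the endpoint pair of) a biedge. -/
def gvalH (dW : ↥B.Qset → ℚ) (e : B.ℰ) : ℚ :=
  if h : ∃ q : ↥B.Qset, s((q : B.W × B.W).1, (q : B.W × B.W).2) = B.τH e then dW h.choose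
  else 0

/-- Incidences of the graph `G`: pairs of a biedge and one of its endpoints. -/
def IncG := {q : B.ℰ × B.V // q.2 ∈ B.τG q.1}

/-- Incidences of the graph `H`. -/
def IncH := {q : B.ℰ × B.W // q.2 ∈ B.τH q.1}

instance : Finite B.IncG := by unfold IncG; infer_instance
instance : Finite B.IncH := by unfold IncH; infer_instance

/-- Two incidences `(e,v)`, `(e',v')` of `G` are identified in `B_d` if the `d_V`-levels of
`e` and `e'` agree (say equal to `α`) and `v`, `v'` are connected by edges of level `> α`. -/
def relIncG (dV : ↥B.Pset → ℚ) : B.IncG → B.IncG → Prop := fun a b =>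
  B.gvalG dV a.1.1 = B.gvalG dV b.1.1 ∧
  Relation.EqvGen (fun u v => ∃ e, B.gvalG dV a.1.1 < B.gvalG dV e ∧ B.τG e = s(u, v))
    a.1.2 b.1.2

def relIncH (dW : ↥B.Qset → ℚ) : B.IncH → B.IncH → Prop := fun a b =>
  B.gvalH dW a.1.1 = B.gvalH dW b.1.1 ∧
  Relation.EqvGen (fun u v => ∃ e, B.gvalH dW a.1.1 < B.gvalH dW e ∧ B.τH e = s(u, v))
    a.1.2 b.1.2

def incSetoidG (dV : ↥B.Pset → ℚ) : Setoid B.IncG :=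
  ⟨Relation.EqvGen (B.relIncG dV), Relation.EqvGen.is_equivalence _⟩

def incSetoidH (dW : ↥B.Qset → ℚ) : Setoid B.IncH :=
  ⟨Relation.EqvGen (B.relIncH dW), Relation.EqvGen.is_equivalence _⟩

/-- The vertices of the first graph `G_{d_V}` of the quotient bigraph `B_d`:
classes of incidences.  This realizes the disjoint union of the contractions
`G_{≥α} / G_{>α}` (with isolated vertices discarded). -/
def QVertG (dV : ↥B.Pset → ℚ) := Quotient (B.incSetoidG dV)

def QVertH (dW : ↥B.Qset → ℚ) := Quotient (B.incSetoidH dW)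

/-- The incidence map of `G_{d_V}`. -/
def quotEndsG (dV : ↥B.Pset → ℚ) : B.ℰ → Sym2 (B.QVertG dV) := fun e =>
  s(Quotient.mk (B.incSetoidG dV) ⟨(e, B.eFstG e), B.eFstG_mem e⟩,
    Quotient.mk (B.incSetoidG dV) ⟨(e, B.eSndG e), B.eSndG_mem e⟩)

/-- The incidence map of `H_{d_W}`. -/
def quotEndsH (dW : ↥B.Qset → ℚ) : B.ℰ → Sym2 (B.QVertH dW) := fun e =>
  s(Quotient.mk (B.incSetoidH dW) ⟨(e, B.eFstH e), B.eFstH_mem e⟩,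
    Quotient.mk (B.incSetoidH dW) ⟨(e, B.eSndH e), B.eSndH_mem e⟩)

/-- The quotient bigraph `B_d = (G_{d_V}, H_{d_W})` of a bigraph by a bidistance `(d_V, d_W)`,
with arbitrarily fixed total orders on the new vertex sets.  It has the same biedges as `B`. -/
def quotBigraph (dV : ↥B.Pset → ℚ) (dW : ↥B.Qset → ℚ)
    (oV : LinearOrder (B.QVertG dV)) (oW : LinearOrder (B.QVertH dW)) : Bigraph where
  ℰ := B.ℰ
  V := B.QVertG dV
  W := B.QVertH dW
  finE := B.finE
  finV := Quotient.finite _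
  finW := Quotient.finite _
  τG := B.quotEndsG dV
  τH := B.quotEndsH dW
  ordV := oV
  ordW := oW

/-! ### Untangling -/

/-- `B` untangles via the biedge `ebar` with respect to the decomposition
`ℰ = E1 ⊔ E2 ⊔ {ebar}`, `V = V1 ⊔ V2`, `W = W1 ⊔ W2`:  the graph `G` is the disjoint union
of the subgraph on `V1` with edges `E1 ∪ {ebar}` and the subgraph on `V2` with edges `E2`,
while `H` is the disjoint union of the subgraph on `W1` with edges `E1` and the subgraph on
`W2` with edges `E2 ∪ {ebar}`.  The two bigraphs into which `B` untangles are then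
`B₁ = B.restrict E1` and `B₂ = B.restrict E2`. -/
def Untangles (ebar : B.ℰ) (E1 E2 : Set B.ℰ) (V1 V2 : Set B.V) (W1 W2 : Set B.W) : Prop :=
  ebar ∉ E1 ∧ ebar ∉ E2 ∧ E1 ∩ E2 = ∅ ∧ (∀ e : B.ℰ, e = ebar ∨ e ∈ E1 ∨ e ∈ E2) ∧
  V1 ∩ V2 = ∅ ∧ V1 ∪ V2 = Set.univ ∧
  (∀ e ∈ E1, ∀ v, v ∈ B.τG e → v ∈ V1) ∧ (∀ v, v ∈ B.τG ebar → v ∈ V1) ∧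
  (∀ e ∈ E2, ∀ v, v ∈ B.τG e → v ∈ V2) ∧
  W1 ∩ W2 = ∅ ∧ W1 ∪ W2 = Set.univ ∧
  (∀ e ∈ E1, ∀ x, x ∈ B.τH e → x ∈ W1) ∧
  (∀ e ∈ E2, ∀ x, x ∈ B.τH e → x ∈ W2) ∧ (∀ x, x ∈ B.τH ebar → x ∈ W2)

/-! ### The rational map `f_B` -/

/-- The vector of coordinates of the rational map `f_B`, evaluated on representatives
`x : V → ℂ` and `y : W → ℂ`:  the `e`-th coordinate is `(x_u - x_v)(y_t - y_w)` where
`{u,v} = τ_G(e)` with `u ≺ v` and `{t,w} = τ_H(e)` with `t ≺ w`.  (For a self-loop the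
corresponding factor is `0`.) -/
def fVec (x : B.V → ℂ) (y : B.W → ℂ) : B.ℰ → ℂ :=
  fun e => (x (B.eFstG e) - x (B.eSndG e)) * (y (B.eFstH e) - y (B.eSndH e))

/-- The subspace `L_G` of vectors that are constant on each connected component of `G`. -/
def LG : Submodule ℂ (B.V → ℂ) where
  carrier := {x | ∀ u v : B.V, Relation.EqvGen (adjRel B.τG) u v → x u = x v}
  add_mem' := by
    intro a b ha hb u v h
    simp only [Pi.add_apply, ha u v h, hb u v h]
  zero_mem' := by intro u v _; rfl
  smul_mem' := by
    intro c a ha u v h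
    simp only [Pi.smul_apply, ha u v h]

/-- The subspace `L_H` of vectors that are constant on each connected component of `H`. -/
def LH : Submodule ℂ (B.W → ℂ) where
  carrier := {y | ∀ u v : B.W, Relation.EqvGen (adjRel B.τH) u v → y u = y v}
  add_mem' := by
    intro a b ha hb u v h
    simp only [Pi.add_apply, ha u v h, hb u v h]
  zero_mem' := by intro u v _; rfl
  smul_mem' := by
    intro c a ha u v h
    simp only [Pi.smul_apply, ha u v h]

/-- Dominance of the rational map `f_B`:  the image of `f_B` is not contained in any
proper algebraic subset of `ℙ(ℂ^ℰ)`, equivalently in no zero set of a nonzero homogeneous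
polynomial. -/
def FDominant : Prop :=
  ¬ ∃ (n : ℕ) (P : MvPolynomial B.ℰ ℂ), P ≠ 0 ∧ P.IsHomogeneous n ∧
      ∀ (x : B.V → ℂ) (y : B.W → ℂ), MvPolynomial.eval (B.fVec x y) P = 0

end Bigraph

/-! ### Auxiliary lemmas for Statement 11 -/

theorem sym2_min_max [LinearOrder V] (s : Sym2 V) : s(sMin s, sMax s) = s := by
  induction s using Sym2.ind with
  | _ a b =>
    simp only [sMin, sMax, Sym2.lift_mk]
    rcases le_total a b with h | h
    · rw [min_eq_left h, max_eq_right h]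
    · rw [min_eq_right h, max_eq_left h, Sym2.eq_swap]

theorem sMin_ne_sMax [LinearOrder V] {s : Sym2 V} (h : ¬ s.IsDiag) : sMin s ≠ sMax s := by
  induction s using Sym2.ind with
  | _ a b =>
    simp only [sMin, sMax, Sym2.lift_mk]
    intro heq
    apply h
    apply Sym2.mk_isDiag_iff.mpr
    rcases le_total a b with h' | h'
    · rwa [min_eq_left h', max_eq_right h'] at heq
    · rw [min_eq_right h', max_eq_left h'] at heq
      exact heq.symm

theorem eqvGen_del_iff {ends : E → Sym2 V} {ebar : E} {u v : V}
    (hend : ends ebar = s(u, v))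
    (h : Relation.EqvGen (adjRel (deleteEnds ends ({ebar} : Set E))) u v) :
    ∀ a b, Relation.EqvGen (adjRel (deleteEnds ends ({ebar} : Set E))) a b ↔
      Relation.EqvGen (adjRel ends) a b := by
  intro a b
  constructor
  · exact Relation.EqvGen.mono (fun a b (hab : adjRel (deleteEnds ends ({ebar} : Set E)) a b) =>
      hab.elim fun e he => (⟨e.1, he⟩ : adjRel ends a b)) a b
  · intro hab
    induction hab with
    | rel a b hr =>
      obtain ⟨e, he⟩ := hr
      by_cases hee : e = ebar
      · subst hee
        rw [hend] at he
        rcases Sym2.eq_iff.mp he with ⟨rfl, rfl⟩ | ⟨rfl, rfl⟩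
        · exact h
        · exact Relation.EqvGen.symm _ _ h
      · exact Relation.EqvGen.rel _ _ ⟨⟨e, hee⟩, he⟩
    | refl a => exact Relation.EqvGen.refl a
    | symm a b _ ih => exact Relation.EqvGen.symm _ _ ih
    | trans a b c _ _ ih1 ih2 => exact Relation.EqvGen.trans _ _ _ ih1 ih2

theorem not_eqvGen_of_isBridge {ends : E → Sym2 V} {ebar : E} {u v : V}
    (hend : ends ebar = s(u, v)) (hb : IsBridge ends ebar) :
    ¬ Relation.EqvGen (adjRel (deleteEnds ends ({ebar} : Set E))) u v := by
  intro h
  have hiff := eqvGen_del_iff hend h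
  have hcc : numCC (deleteEnds ends ({ebar} : Set E)) = numCC ends :=
    Nat.card_congr (Quotient.congrRight hiff)
  rw [IsBridge, hcc] at hb
  exact lt_irrefl _ hb

theorem tauNe_of_isBridge {ends : E → Sym2 V} {ebar e : E}
    (hb : IsBridge ends ebar) (hne : e ≠ ebar) {u v : V} (hend : ends ebar = s(u, v)) :
    ends e ≠ ends ebar := by
  intro heq
  exact not_eqvGen_of_isBridge hend hb
    (Relation.EqvGen.rel _ _ ⟨⟨e, by simpa using hne⟩, heq.trans hend⟩)

theorem walk_iff {α : Type} (Vp : α → Prop) {n : ℕ} {u : ℕ → α}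
    (step : ∀ i : Fin n, (Vp (u i.1) ↔ Vp (u (i.1 + 1)))) :
    ∀ k, k < n → (Vp (u k) ↔ Vp (u 0)) := by
  intro k
  induction k with
  | zero => exact fun _ => Iff.rfl
  | succ m ih =>
    intro hm
    have hmn : m < n := Nat.lt_of_succ_lt hm
    exact ((step ⟨m, hmn⟩).symm).trans (ih hmn)

/-- If a pseudo-Laman bigraph `B` untangles via `ē` (with `ℰ₁, ℰ₂`
nonempty) and `ē` is a bridge in `G` but not in `H`, then `B` has no positive Laman number
with respect to `ē`. -/
theorem statement11 (B : Bigraph) (hloop : ¬ B.HasLoop) (hpl : B.PseudoLaman)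
    (ebar : B.ℰ) (E1 E2 : Set B.ℰ) (V1 V2 : Set B.V) (W1 W2 : Set B.W)
    (hun : B.Untangles ebar E1 E2 V1 V2 W1 W2)
    (h1 : E1.Nonempty) (h2 : E2.Nonempty)
    (hbG : IsBridge B.τG ebar) (hbH : ¬ IsBridge B.τH ebar) :
    ¬ ∃ N : ℕ, 1 ≤ N ∧ B.HasLamanNumber ebar N := by
  rintro ⟨N, hN, hLam⟩
  rcases hLam with ⟨hl, -⟩ | ⟨-, P, hP, hgen⟩
  · exact hloop hl
  obtain ⟨hE1b, hE2b, hE12, hallE, hV12, hVu, hGE1, hGb, hGE2, hW12, hWu, hHE1, hHE2, hHb⟩ :=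
    hun
  obtain ⟨e₁, he₁⟩ := h1
  have he₁ne : e₁ ≠ ebar := fun h => hE1b (h ▸ he₁)
  have hVdis : ∀ v, v ∈ V1 → v ∈ V2 → False := fun v hv1 hv2 =>
    Set.eq_empty_iff_forall_notMem.mp hV12 v ⟨hv1, hv2⟩
  have hWdis : ∀ w, w ∈ W1 → w ∈ W2 → False := fun w hw1 hw2 =>
    Set.eq_empty_iff_forall_notMem.mp hW12 w ⟨hw1, hw2⟩
  have hndG : ∀ e, ¬ (B.τG e).IsDiag := fun e hd => hloop (Or.inl ⟨e, hd⟩)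
  have hndH : ∀ e, ¬ (B.τH e).IsDiag := fun e hd => hloop (Or.inr ⟨e, hd⟩)
  have htauG : ∀ e : B.ℰ, s(B.eFstG e, B.eSndG e) = B.τG e := fun e => by
    letI := B.ordV; exact sym2_min_max _
  have htauH : ∀ e : B.ℰ, s(B.eFstH e, B.eSndH e) = B.τH e := fun e => by
    letI := B.ordW; exact sym2_min_max _
  have hneG : ∀ e : B.ℰ, B.eFstG e ≠ B.eSndG e := fun e => by
    letI := B.ordV; exact sMin_ne_sMax (hndG e)
  have hneH : ∀ e : B.ℰ, B.eFstH e ≠ B.eSndH e := fun e => by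
    letI := B.ordW; exact sMin_ne_sMax (hndH e)
  -- notation for the endpoints of ebar in G
  set ub : B.V := B.eFstG ebar with hub
  set vb : B.V := B.eSndG ebar with hvb
  have hGsig : B.τG ebar = s(ub, vb) := (htauG ebar).symm
  have hubV1 : ub ∈ V1 := hGb ub (B.eFstG_mem ebar)
  have hvbV1 : vb ∈ V1 := hGb vb (B.eSndG_mem ebar)
  -- parallel-edge exclusion and the bridge separation fact
  have hpar : ∀ e : B.ℰ, e ≠ ebar → B.τG e ≠ B.τG ebar := fun e hne =>
    tauNe_of_isBridge hbG hne hGsig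
  have hnodel : ¬ Relation.EqvGen (adjRel (deleteEnds B.τG ({ebar} : Set B.ℰ))) ub vb :=
    not_eqvGen_of_isBridge hGsig hbG
  -- part lemmas for pairs
  have hpairG : ∀ p : B.V × B.V, p ∈ B.Pset → (p.1 ∈ V1 ↔ p.2 ∈ V1) := by
    rintro ⟨a, b⟩ ⟨-, e, he⟩
    have ha : a ∈ B.τG e := by rw [he]; exact Sym2.mem_mk_left a b
    have hb : b ∈ B.τG e := by rw [he]; exact Sym2.mem_mk_right a b
    rcases hallE e with rfl | h1 | h2
    · simp [hGb a ha, hGb b hb]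
    · simp [hGE1 e h1 a ha, hGE1 e h1 b hb]
    · exact iff_of_false (fun hm => hVdis a hm (hGE2 e h2 a ha))
        (fun hm => hVdis b hm (hGE2 e h2 b hb))
  have hpairH : ∀ q : B.W × B.W, q ∈ B.Qset → (q.1 ∈ W1 ↔ q.2 ∈ W1) := by
    rintro ⟨a, b⟩ ⟨-, e, he⟩
    have ha : a ∈ B.τH e := by rw [he]; exact Sym2.mem_mk_left a b
    have hb : b ∈ B.τH e := by rw [he]; exact Sym2.mem_mk_right a b
    rcases hallE e with rfl | h1 | h2
    · exact iff_of_false (fun hm => hWdis a hm (hHb a ha)) (fun hm => hWdis b hm (hHb b hb))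
    · simp [hHE1 e h1 a ha, hHE1 e h1 b hb]
    · exact iff_of_false (fun hm => hWdis a hm (hHE2 e h2 a ha))
        (fun hm => hWdis b hm (hHE2 e h2 b hb))
  -- choose a generic parameter vector
  set e₁' : {e : B.ℰ // e ≠ ebar} := ⟨e₁, he₁ne⟩ with he₁'
  have hP' : P * MvPolynomial.X e₁' ≠ 0 := mul_ne_zero hP (MvPolynomial.X_ne_zero e₁')
  obtain ⟨lam, hlam⟩ : ∃ lam, MvPolynomial.eval lam (P * MvPolynomial.X e₁') ≠ 0 := by
    by_contra hcon
    push_neg at hcon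
    exact hP' (MvPolynomial.funext fun x => by simpa using hcon x)
  rw [map_mul, MvPolynomial.eval_X] at hlam
  have hPl : MvPolynomial.eval lam P ≠ 0 := fun h => hlam (by rw [h, zero_mul])
  have hl1 : lam e₁' ≠ 0 := fun h => hlam (by rw [h, mul_zero])
  obtain ⟨hfin, hcard⟩ := hgen lam hPl
  rcases Set.eq_empty_or_nonempty (B.ZSet ebar lam) with hemp | ⟨⟨x, y⟩, hxy⟩
  · rw [hemp] at hcard
    simp only [Nat.card_of_isEmpty] at hcard
    omega
  obtain ⟨hx1, hy1, hprod, hxw, hyw⟩ := hxy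
  -- basic pairs
  have hP1mem : ((ub, vb) : B.V × B.V) ∈ B.Pset := ⟨hneG ebar, ebar, hGsig⟩
  have hP2mem : ((vb, ub) : B.V × B.V) ∈ B.Pset :=
    ⟨(hneG ebar).symm, ebar, by rw [hGsig, Sym2.eq_swap]⟩
  set P1 : ↥B.Pset := ⟨(ub, vb), hP1mem⟩ with hP1def
  set P2 : ↥B.Pset := ⟨(vb, ub), hP2mem⟩ with hP2def
  have xP1 : x P1 = 1 := hx1 P1 rfl
  have xP2 : x P2 = -1 := by
    have hsum2 := hxw 2 (fun k => if k = 1 then vb else ub) ![P1, P2] ?_ (by norm_num)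
    · rw [Fin.sum_univ_two] at hsum2
      simp only [Matrix.cons_val_zero, Matrix.cons_val_one, Matrix.head_cons] at hsum2
      rw [xP1] at hsum2
      linear_combination hsum2
    · intro i
      fin_cases i <;> simp [P1, P2]
  -- the scaled sets
  set Sx : Set ↥B.Pset :=
    {p | (p : B.V × B.V).1 ∈ V1 ∧ s((p : B.V × B.V).1, (p : B.V × B.V).2) ≠ B.τG ebar}
    with hSxdef
  set Sy : Set ↥B.Qset := {q | (q : B.W × B.W).1 ∈ W1} with hSydef
  -- the potential function g measuring the side of the bridge
  set Bs : Set B.V :=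
    {v : B.V | Relation.EqvGen (adjRel (deleteEnds B.τG ({ebar} : Set B.ℰ))) ub v} with hBsdef
  set g : B.V → ℂ := Set.indicator Bs (fun _ => (1 : ℂ)) with hgdef
  have hgub : g ub = 1 := Set.indicator_of_mem (Relation.EqvGen.refl ub) _
  have hgvb : g vb = 0 := Set.indicator_of_notMem hnodel _
  have hgadj : ∀ a b : B.V, adjRel (deleteEnds B.τG ({ebar} : Set B.ℰ)) a b → g a = g b := by
    intro a b hab
    have hiff : a ∈ Bs ↔ b ∈ Bs :=
      ⟨fun h => Relation.EqvGen.trans _ _ _ h (Relation.EqvGen.rel _ _ hab),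
       fun h => Relation.EqvGen.trans _ _ _ h
         (Relation.EqvGen.symm _ _ (Relation.EqvGen.rel _ _ hab))⟩
    by_cases hm : a ∈ Bs
    · rw [hgdef, Set.indicator_of_mem hm, Set.indicator_of_mem (hiff.mp hm)]
    · rw [hgdef, Set.indicator_of_notMem hm,
        Set.indicator_of_notMem (fun h => hm (hiff.mpr h))]
  -- the one-parameter family of solutions
  set Fam : {t : ℂ // t ≠ 0} → ((↥B.Pset → ℂ) × (↥B.Qset → ℂ)) := fun t =>
    (fun p => x p + (t.1 - 1) * Sx.indicator x p,
     fun q => y q + ((t.1)⁻¹ - 1) * Sy.indicator y q) with hFamdef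
  have hmem : ∀ t : {t : ℂ // t ≠ 0}, Fam t ∈ B.ZSet ebar lam := by
    rintro ⟨t, ht⟩
    refine ⟨?_, ?_, ?_, ?_, ?_⟩
    · -- normalization in G
      intro p hp
      have hnot : p ∉ Sx := by
        rintro ⟨-, hne⟩
        apply hne
        rw [hp]
        exact htauG ebar
      show x p + (t - 1) * Sx.indicator x p = 1
      rw [Set.indicator_of_notMem hnot, mul_zero, add_zero]
      exact hx1 p hp
    · -- normalization in H
      intro q hq
      have hnot : q ∉ Sy := by
        intro hmem'
        apply hWdis (q : B.W × B.W).1 hmem'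
        rw [hq]
        exact hHb _ (B.eFstH_mem ebar)
      show y q + (t⁻¹ - 1) * Sy.indicator y q = 1
      rw [Set.indicator_of_notMem hnot, mul_zero, add_zero]
      exact hy1 q hq
    · -- product equations
      rintro ⟨e, hne⟩ p q hp hq
      rcases hallE e with rfl | h1 | h2
      · exact absurd rfl hne
      · -- e ∈ E1 : both factors are scaled
        have hpS : p ∈ Sx := by
          constructor
          · rw [hp]
            exact hGE1 e h1 _ (B.eFstG_mem e)
          · rw [hp]
            show s(B.eFstG e, B.eSndG e) ≠ B.τG ebar
            rw [htauG e]
            exact hpar e hne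
        have hqS : q ∈ Sy := by
          show (q : B.W × B.W).1 ∈ W1
          rw [hq]
          exact hHE1 e h1 _ (B.eFstH_mem e)
        show (x p + (t - 1) * Sx.indicator x p) * (y q + (t⁻¹ - 1) * Sy.indicator y q) =
          lam ⟨e, hne⟩
        rw [Set.indicator_of_mem hpS, Set.indicator_of_mem hqS]
        have hxy' := hprod ⟨e, hne⟩ p q hp hq
        calc (x p + (t - 1) * x p) * (y q + (t⁻¹ - 1) * y q)
            = (t * t⁻¹) * (x p * y q) := by ring
          _ = lam ⟨e, hne⟩ := by rw [mul_inv_cancel₀ ht, one_mul]; exact hxy'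
      · -- e ∈ E2 : nothing is scaled
        have hpS : p ∉ Sx := by
          rintro ⟨hm, -⟩
          apply hVdis (p : B.V × B.V).1 hm
          rw [hp]
          exact hGE2 e h2 _ (B.eFstG_mem e)
        have hqS : q ∉ Sy := by
          intro hm
          apply hWdis (q : B.W × B.W).1 hm
          rw [hq]
          exact hHE2 e h2 _ (B.eFstH_mem e)
        show (x p + (t - 1) * Sx.indicator x p) * (y q + (t⁻¹ - 1) * Sy.indicator y q) =
          lam ⟨e, hne⟩
        rw [Set.indicator_of_notMem hpS, Set.indicator_of_notMem hqS, mul_zero, add_zero,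
          mul_zero, add_zero]
        exact hprod ⟨e, hne⟩ p q hp hq
    · -- cycle equations in G
      intro n u w hw hcl
      have hw1 : ∀ i : Fin n, ((w i : B.V × B.V)).1 = u i.1 := fun i => by rw [hw i]
      have hw2 : ∀ i : Fin n, ((w i : B.V × B.V)).2 = u (i.1 + 1) := fun i => by rw [hw i]
      have hstep : ∀ i : Fin n, ((u i.1 ∈ V1) ↔ (u (i.1 + 1) ∈ V1)) := by
        intro i
        have h := hpairG (w i : B.V × B.V) (w i).2
        rw [hw1 i, hw2 i] at h
        exact h
      have hx0 : ∑ i, x (w i) = 0 := hxw n u w hw hcl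
      have hT : ∑ i, Sx.indicator x (w i) = 0 := by
        by_cases hc : u 0 ∈ V1
        · -- the walk stays on the bridge side; use the telescoping argument
          have hall : ∀ i : Fin n, u i.1 ∈ V1 := fun i =>
            (walk_iff (· ∈ V1) hstep i.1 i.2).mpr hc
          have hpt : ∀ i : Fin n,
              Sx.indicator x (w i) = x (w i) - (g (u i.1) - g (u (i.1 + 1))) := by
            intro i
            by_cases hb : s(u i.1, u (i.1 + 1)) = B.τG ebar
            · have hnot : w i ∉ Sx := by
                rintro ⟨-, hne⟩
                apply hne
                rw [hw1 i, hw2 i]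
                exact hb
              rw [Set.indicator_of_notMem hnot]
              rw [hGsig] at hb
              rcases Sym2.eq_iff.mp hb with ⟨h1', h2'⟩ | ⟨h1', h2'⟩
              · have hxwi : x (w i) = 1 := hx1 (w i) (by rw [hw i, h1', h2'])
                rw [hxwi, h1', h2', hgub, hgvb]
                ring
              · have hwi : w i = P2 := Subtype.ext (by rw [hw i, h1', h2'])
                rw [hwi, xP2, h1', h2', hgvb, hgub]
                ring
            · have hmem' : w i ∈ Sx := by
                constructor
                · rw [hw1 i]; exact hall i
                · rw [hw1 i, hw2 i]; exact hb
              rw [Set.indicator_of_mem hmem']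
              obtain ⟨-, e, he⟩ := (w i).2
              rw [hw1 i, hw2 i] at he
              have hene : e ≠ ebar := by
                rintro rfl
                exact hb he.symm
              have hgeq : g (u i.1) = g (u (i.1 + 1)) :=
                hgadj _ _ ⟨⟨e, by simpa using hene⟩, he⟩
              rw [hgeq]
              ring
          calc ∑ i, Sx.indicator x (w i)
              = ∑ i : Fin n, (x (w i) - (g (u i.1) - g (u (i.1 + 1)))) :=
                Finset.sum_congr rfl fun i _ => hpt i
            _ = (∑ i, x (w i)) - ∑ i : Fin n, (g (u i.1) - g (u (i.1 + 1))) := by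
                rw [Finset.sum_sub_distrib]
            _ = 0 - (g (u 0) - g (u n)) := by
                rw [hx0, Fin.sum_univ_eq_sum_range (fun k => g (u k) - g (u (k + 1))) n,
                  Finset.sum_range_sub' (fun k => g (u k)) n]
            _ = 0 := by rw [hcl]; ring
        · -- the walk stays on the other side; nothing is scaled
          refine Finset.sum_eq_zero fun i _ => ?_
          refine Set.indicator_of_notMem (fun hmem' => hc ?_) x
          have := hmem'.1
          rw [hw1 i] at this
          exact (walk_iff (· ∈ V1) hstep i.1 i.2).mp this
      show ∑ i, (x (w i) + (t - 1) * Sx.indicator x (w i)) = 0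
      rw [Finset.sum_add_distrib, ← Finset.mul_sum, hx0, hT, mul_zero, add_zero]
    · -- cycle equations in H
      intro n u w hw hcl
      have hw1 : ∀ i : Fin n, ((w i : B.W × B.W)).1 = u i.1 := fun i => by rw [hw i]
      have hw2 : ∀ i : Fin n, ((w i : B.W × B.W)).2 = u (i.1 + 1) := fun i => by rw [hw i]
      have hstep : ∀ i : Fin n, ((u i.1 ∈ W1) ↔ (u (i.1 + 1) ∈ W1)) := by
        intro i
        have h := hpairH (w i : B.W × B.W) (w i).2
        rw [hw1 i, hw2 i] at h
        exact h
      have hy0 : ∑ i, y (w i) = 0 := hyw n u w hw hcl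
      have hT : ∑ i, Sy.indicator y (w i) = 0 := by
        by_cases hc : u 0 ∈ W1
        · have hall : ∀ i : Fin n, u i.1 ∈ W1 := fun i =>
            (walk_iff (· ∈ W1) hstep i.1 i.2).mpr hc
          have hpt : ∀ i : Fin n, Sy.indicator y (w i) = y (w i) := by
            intro i
            refine Set.indicator_of_mem ?_ y
            show ((w i : B.W × B.W)).1 ∈ W1
            rw [hw1 i]
            exact hall i
          rw [Finset.sum_congr rfl fun i _ => hpt i]
          exact hy0
        · refine Finset.sum_eq_zero fun i _ => ?_
          refine Set.indicator_of_notMem (fun hmem' => hc ?_) y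
          have : ((w i : B.W × B.W)).1 ∈ W1 := hmem'
          rw [hw1 i] at this
          exact (walk_iff (· ∈ W1) hstep i.1 i.2).mp this
      show ∑ i, (y (w i) + (t⁻¹ - 1) * Sy.indicator y (w i)) = 0
      rw [Finset.sum_add_distrib, ← Finset.mul_sum, hy0, hT, mul_zero, add_zero]
  -- the distinguished pair coming from e₁ shows that the family is injective
  have hp₁mem : ((B.eFstG e₁, B.eSndG e₁) : B.V × B.V) ∈ B.Pset :=
    ⟨hneG e₁, e₁, (htauG e₁).symm⟩
  have hq₁mem : ((B.eFstH e₁, B.eSndH e₁) : B.W × B.W) ∈ B.Qset :=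
    ⟨hneH e₁, e₁, (htauH e₁).symm⟩
  set p₁ : ↥B.Pset := ⟨(B.eFstG e₁, B.eSndG e₁), hp₁mem⟩ with hp₁def
  set q₁ : ↥B.Qset := ⟨(B.eFstH e₁, B.eSndH e₁), hq₁mem⟩ with hq₁def
  have hp₁S : p₁ ∈ Sx := by
    constructor
    · exact hGE1 e₁ he₁ _ (B.eFstG_mem e₁)
    · show s(B.eFstG e₁, B.eSndG e₁) ≠ B.τG ebar
      rw [htauG e₁]
      exact hpar e₁ he₁ne
  have hxp₁ : x p₁ ≠ 0 := by
    intro h0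
    apply hl1
    have hp : x p₁ * y q₁ = lam e₁' := hprod e₁' p₁ q₁ rfl rfl
    rw [← hp, h0, zero_mul]
  have hinj : Function.Injective Fam := by
    rintro ⟨t1, ht1⟩ ⟨t2, ht2⟩ heq
    have h1' := congrFun (congrArg Prod.fst heq) p₁
    simp only [hFamdef, Set.indicator_of_mem hp₁S] at h1'
    have : (t1 - 1) = (t2 - 1) := by
      have := add_left_cancel h1'
      exact mul_right_cancel₀ hxp₁ this
    have ht : t1 = t2 := by linear_combination this
    exact Subtype.ext ht
  haveI : Infinite {t : ℂ // t ≠ 0} := by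
    refine Infinite.of_injective (fun n : ℕ => ⟨(n : ℂ) + 1, Nat.cast_add_one_ne_zero n⟩) ?_
    intro a b hab
    have h' : ((a : ℂ) + 1 : ℂ) = (b : ℂ) + 1 := congrArg Subtype.val hab
    have : (a : ℂ) = (b : ℂ) := by linear_combination h'
    exact_mod_cast this
  exact (Set.infinite_of_injective_forall_mem hinj hmem) hfin

end LamanPaper
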